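/- For all natural numbers k and j with j ≤ k, the following identity holds in ℚ: (j!/k!) · ∑_T ∏_{t∈T} t = ∑_{(i_1,…,i_j)} 1/(i_1 i_2 ⋯ i_j), where the left-hand sum ranges over all subsets T of {1, 2, …, k−1} of cardinality k−j (each contributing the product of its elements, the empty product being 1), and the right-hand sum ranges over all j-tuples (i_1,…,i_j) of positive integers with i_1 + ⋯ + i_j = k. -/

import Mathlib

open Finset

/-- Elementary symmetric sum `e_m(1,…,n)`. -/
def Eaux (m n : ℕ) : ℚ :=
  ∑ T ∈ Finset.powersetCard m (Finset.Icc 1 n), ∏ t ∈ T, (t : ℚ)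

/-- Sum over compositions (with possibly-zero parts, those terms vanish). -/
def Gaux (j k : ℕ) : ℚ :=
  ∑ i ∈ Finset.Nat.antidiagonalTuple j k, ∏ s, ((i s : ℚ))⁻¹

lemma Eaux_zero (n : ℕ) : Eaux 0 n = 1 := by
  simp [Eaux]

lemma Eaux_of_gt {m n : ℕ} (h : n < m) : Eaux m n = 0 := by
  have : (Finset.Icc 1 n).card < m := by
    rwa [Nat.card_Icc, Nat.add_sub_cancel]
  rw [Eaux, Finset.powersetCard_eq_empty.2 this, Finset.sum_empty]

lemma Eaux_rec (m n : ℕ) : Eaux (m + 1) (n + 1) = Eaux (m + 1) n + (n + 1 : ℚ) * Eaux m n := by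
  have hins : Finset.Icc 1 (n + 1) = insert (n + 1) (Finset.Icc 1 n) := by
    ext x; simp [Finset.mem_Icc, Finset.mem_insert]; omega
  have hnot : (n + 1) ∉ Finset.Icc 1 n := by simp
  rw [Eaux, hins, Finset.powersetCard_succ_insert hnot, Finset.sum_union, Eaux, Eaux]
  · congr 1
    rw [Finset.sum_image, Finset.mul_sum]
    · apply Finset.sum_congr rfl
      intro T hT
      have hTn : (n + 1) ∉ T := by
        intro hc
        exact hnot ((Finset.mem_powersetCard.1 hT).1 hc)
      rw [Finset.prod_insert hTn]
      push_cast
      ring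
    · intro T hT T' hT' hE
      have h1 : (n + 1) ∉ T := fun hc => hnot ((Finset.mem_powersetCard.1 hT).1 hc)
      have h2 : (n + 1) ∉ T' := fun hc => hnot ((Finset.mem_powersetCard.1 hT').1 hc)
      have := congrArg (fun s => Finset.erase s (n + 1)) hE
      simpa [Finset.erase_insert, h1, h2] using this
  · rw [Finset.disjoint_left]
    intro T hT hT'
    obtain ⟨T', hT', rfl⟩ := Finset.mem_image.1 hT'
    have : (n + 1) ∈ insert (n + 1) T' := Finset.mem_insert_self _ _
    exact hnot ((Finset.mem_powersetCard.1 hT).1 this)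

lemma Gaux_zero_succ (k : ℕ) : Gaux 0 (k + 1) = 0 := by
  simp [Gaux, Finset.Nat.antidiagonalTuple_zero_succ]

lemma Gaux_zero_zero : Gaux 0 0 = 1 := by
  simp [Gaux, Finset.Nat.antidiagonalTuple_zero_zero]

lemma Gaux_diag (k : ℕ) : Gaux k k = 1 := by
  rw [Gaux]
  rw [Finset.sum_eq_single_of_mem (fun _ : Fin k => 1)]
  · simp
  · rw [Finset.Nat.mem_antidiagonalTuple]
    simp
  · intro i hi hne
    rw [Finset.Nat.mem_antidiagonalTuple] at hi
    by_cases hz : ∃ t, i t = 0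
    · obtain ⟨t, ht⟩ := hz
      exact Finset.prod_eq_zero (Finset.mem_univ t) (by simp [ht])
    · push_neg at hz
      exfalso
      obtain ⟨s, hs⟩ : ∃ s, i s ≠ 1 := by
        by_contra h
        push_neg at h
        exact hne (funext h)
      have h1 : ∀ t ∈ Finset.univ (α := Fin k), 1 ≤ i t := fun t _ =>
        Nat.one_le_iff_ne_zero.2 (hz t)
      have h2 : ∑ t : Fin k, (1 : ℕ) < ∑ t, i t := by
        apply Finset.sum_lt_sum h1 ⟨s, Finset.mem_univ s, ?_⟩
        have := hz s
        omega
      simp [hi] at h2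

lemma swap_sum (j k : ℕ) (s : Fin (j + 1)) :
    ∑ i ∈ Finset.Nat.antidiagonalTuple (j + 1) k, (i s : ℚ) * ∏ t, ((i t : ℚ))⁻¹ =
    ∑ i ∈ Finset.Nat.antidiagonalTuple (j + 1) k, (i 0 : ℚ) * ∏ t, ((i t : ℚ))⁻¹ := by
  apply Finset.sum_bij' (fun i _ => i ∘ Equiv.swap 0 s) (fun i _ => i ∘ Equiv.swap 0 s)
  · intro i hi
    rw [Finset.Nat.mem_antidiagonalTuple] at hi ⊢
    rw [← hi]
    exact Equiv.sum_comp (Equiv.swap 0 s) i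
  · intro i hi
    rw [Finset.Nat.mem_antidiagonalTuple] at hi ⊢
    rw [← hi]
    exact Equiv.sum_comp (Equiv.swap 0 s) i
  · intro i _
    funext t
    simp [Function.comp]
  · intro i _
    funext t
    simp [Function.comp]
  · intro i _
    have h1 : (i ∘ Equiv.swap 0 s) 0 = i s := by simp
    have h2 : ∏ t, (((i ∘ Equiv.swap 0 s) t : ℚ))⁻¹ = ∏ t, ((i t : ℚ))⁻¹ :=
      Equiv.prod_comp (Equiv.swap 0 s) (fun t => ((i t : ℚ))⁻¹)
    rw [h1, h2]

lemma stepB (j k : ℕ) :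
    ∑ i ∈ Finset.Nat.antidiagonalTuple (j + 1) k, (i 0 : ℚ) * ∏ t, ((i t : ℚ))⁻¹ =
    ∑ m ∈ Finset.range k, Gaux j m := by
  have key : ∑ i ∈ Finset.Nat.antidiagonalTuple (j + 1) k, (i 0 : ℚ) * ∏ t, ((i t : ℚ))⁻¹ =
      ∑ m ∈ Finset.range (k + 1), ∑ i' ∈ Finset.Nat.antidiagonalTuple j m,
        ((k - m : ℕ) : ℚ) * (((k - m : ℕ) : ℚ))⁻¹ * ∏ t, ((i' t : ℚ))⁻¹ := by
    rw [Finset.sum_sigma']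
    apply Finset.sum_bij' (fun i _ => (⟨k - i 0, Fin.tail i⟩ : Σ _ : ℕ, Fin j → ℕ))
      (fun x _ => Fin.cons (k - x.1) x.2)
    case hi =>
      intro i hi
      rw [Finset.Nat.mem_antidiagonalTuple] at hi
      rw [Fin.sum_univ_succ] at hi
      rw [Finset.mem_sigma]
      constructor
      · rw [Finset.mem_range]
        show k - i 0 < k + 1
        omega
      · rw [Finset.Nat.mem_antidiagonalTuple]
        show ∑ t, Fin.tail i t = k - i 0
        simp only [Fin.tail]
        omega
    case hj =>
      intro x hx
      rw [Finset.mem_sigma, Finset.mem_range, Finset.Nat.mem_antidiagonalTuple] at hx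
      rw [Finset.Nat.mem_antidiagonalTuple, Fin.sum_univ_succ, Fin.cons_zero]
      have : ∑ t : Fin j, Fin.cons (α := fun _ => ℕ) (k - x.1) x.2 t.succ = x.1 := by
        simp only [Fin.cons_succ]
        exact hx.2
      rw [this]
      omega
    case left_neg =>
      intro i hi
      rw [Finset.Nat.mem_antidiagonalTuple, Fin.sum_univ_succ] at hi
      show Fin.cons (k - (k - i 0)) (Fin.tail i) = i
      have h0 : k - (k - i 0) = i 0 := by omega
      rw [h0]
      exact Fin.cons_self_tail i
    case right_neg =>
      intro x hx
      obtain ⟨m, y⟩ := x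
      rw [Finset.mem_sigma, Finset.mem_range] at hx
      have h0 : k - (k - m) = m := by
        have h1 : m < k + 1 := hx.1
        omega
      simp [Fin.tail_cons, Fin.cons_zero, h0]
    case h =>
      intro i hi
      rw [Finset.Nat.mem_antidiagonalTuple, Fin.sum_univ_succ] at hi
      show (i 0 : ℚ) * ∏ t, ((i t : ℚ))⁻¹ =
        ((k - (k - i 0) : ℕ) : ℚ) * (((k - (k - i 0) : ℕ) : ℚ))⁻¹ * ∏ t, ((Fin.tail i t : ℚ))⁻¹
      have h0 : k - (k - i 0) = i 0 := by omega
      simp only [h0]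
      rw [Fin.prod_univ_succ]
      have : ∀ t : Fin j, ((Fin.tail i t : ℚ))⁻¹ = ((i t.succ : ℚ))⁻¹ := fun t => rfl
      simp only [this]
      ring
  rw [key, Finset.sum_range_succ]
  have hlast : ∑ i' ∈ Finset.Nat.antidiagonalTuple j k,
      ((k - k : ℕ) : ℚ) * (((k - k : ℕ) : ℚ))⁻¹ * ∏ t, ((i' t : ℚ))⁻¹ = 0 := by
    simp
  rw [hlast, add_zero]
  apply Finset.sum_congr rfl
  intro m hm
  rw [Finset.mem_range] at hm
  have hne : ((k - m : ℕ) : ℚ) ≠ 0 := by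
    rw [Nat.cast_ne_zero]
    omega
  rw [Gaux]
  apply Finset.sum_congr rfl
  intro i' _
  rw [mul_inv_cancel₀ hne, one_mul]

lemma Gaux_FH (j k : ℕ) :
    (k : ℚ) * Gaux (j + 1) k = (j + 1 : ℚ) * ∑ m ∈ Finset.range k, Gaux j m := by
  have h1 : (k : ℚ) * Gaux (j + 1) k =
      ∑ i ∈ Finset.Nat.antidiagonalTuple (j + 1) k, ∑ s, (i s : ℚ) * ∏ t, ((i t : ℚ))⁻¹ := by
    rw [Gaux, Finset.mul_sum]
    apply Finset.sum_congr rfl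
    intro i hi
    rw [Finset.Nat.mem_antidiagonalTuple] at hi
    rw [← Finset.sum_mul]
    congr 1
    exact_mod_cast hi.symm
  rw [h1, Finset.sum_comm]
  have h2 : ∀ s : Fin (j + 1),
      ∑ i ∈ Finset.Nat.antidiagonalTuple (j + 1) k, (i s : ℚ) * ∏ t, ((i t : ℚ))⁻¹ =
      ∑ m ∈ Finset.range k, Gaux j m := fun s => by rw [swap_sum, stepB]
  rw [Finset.sum_congr rfl (fun s _ => h2 s), Finset.sum_const, Finset.card_univ,
    Fintype.card_fin, nsmul_eq_mul]
  push_cast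
  ring

lemma Gaux_local (j k : ℕ) :
    ((k : ℚ) + 1) * Gaux (j + 1) (k + 1) = (k : ℚ) * Gaux (j + 1) k + (j + 1 : ℚ) * Gaux j k := by
  have h1 := Gaux_FH j (k + 1)
  have h2 := Gaux_FH j k
  rw [Finset.sum_range_succ, mul_add] at h1
  push_cast at h1
  linarith [h1, h2]

lemma main_aux : ∀ k j d : ℕ, k = j + d →
    (j.factorial : ℚ) / (k.factorial : ℚ) * Eaux d (k - 1) = Gaux j k := by
  intro k
  induction k with
  | zero =>
    intro j d h
    obtain ⟨rfl, rfl⟩ : j = 0 ∧ d = 0 := by omega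
    simp [Eaux_zero, Gaux_zero_zero]
  | succ k ih =>
    intro j d h
    match j with
    | 0 =>
      have hd : d = k + 1 := by omega
      subst hd
      rw [Gaux_zero_succ, Eaux_of_gt (by omega)]
      ring
    | j' + 1 =>
      match d with
      | 0 =>
        have hj : j' = k := by omega
        subst hj
        rw [Eaux_zero, Gaux_diag, mul_one, div_self]
        exact Nat.cast_ne_zero.2 (Nat.factorial_ne_zero _)
      | d' + 1 =>
        have hk : k = j' + 1 + d' := by omega
        have hIH1 : ((j' + 1).factorial : ℚ) / (k.factorial : ℚ) * Eaux d' (k - 1) =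
            Gaux (j' + 1) k := ih (j' + 1) d' hk
        have hIH2 : (j'.factorial : ℚ) / (k.factorial : ℚ) * Eaux (d' + 1) (k - 1) =
            Gaux j' k := ih j' (d' + 1) (by omega)
        have hloc := Gaux_local j' k
        obtain ⟨K, rfl⟩ : ∃ K, k = K + 1 := ⟨k - 1, by omega⟩
        have hE : Eaux (d' + 1) (K + 1) = Eaux (d' + 1) K + ((K : ℚ) + 1) * Eaux d' K := by
          have := Eaux_rec d' K
          push_cast at this ⊢
          exact this
        set k := K + 1 with hkdef
        have hksub : k + 1 - 1 = k := by omega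
        have hksub2 : k - 1 = K := by omega
        rw [hksub2] at hIH1 hIH2
        rw [hksub]
        have hEk : Eaux (d' + 1) k = Eaux (d' + 1) K + (k : ℚ) * Eaux d' K := by
          rw [hkdef]; push_cast; exact hE
        rw [hEk]
        have hkf : (k.factorial : ℚ) ≠ 0 := Nat.cast_ne_zero.2 (Nat.factorial_ne_zero _)
        have hk1f : ((k + 1).factorial : ℚ) ≠ 0 := Nat.cast_ne_zero.2 (Nat.factorial_ne_zero _)
        have hfs : ((k + 1).factorial : ℚ) = ((k : ℚ) + 1) * (k.factorial : ℚ) := by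
          rw [Nat.factorial_succ]; push_cast; ring
        have hjs : (((j' + 1).factorial : ℚ)) = ((j' : ℚ) + 1) * (j'.factorial : ℚ) := by
          rw [Nat.factorial_succ]; push_cast; ring
        have hk1ne : ((k : ℚ) + 1) ≠ 0 := by positivity
        rw [← hIH1, ← hIH2] at hloc
        field_simp [hfs, hjs] at hloc ⊢
        push_cast at hloc ⊢
        rw [hfs, hjs]; rw [hjs] at hloc; linarith [hloc]

/-- The combinatorial identity (3.16):
`(j!/k!) · ∑_{0<t₁<⋯<t_{k-j}<k} t₁⋯t_{k-j} = ∑_{i₁+⋯+i_j=k, iₛ ≥ 1} 1/(i₁⋯i_j)`. -/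
theorem log_taylor_combinatorial_identity (k j : ℕ) (hjk : j ≤ k) :
    (j.factorial : ℚ) / (k.factorial : ℚ) *
        ∑ T ∈ Finset.powersetCard (k - j) (Finset.Icc 1 (k - 1)), ∏ t ∈ T, (t : ℚ) =
      ∑ i ∈ (Finset.Nat.antidiagonalTuple j k).filter (fun i => ∀ s, 0 < i s),
        1 / ∏ s, (i s : ℚ) := by
  have hmain := main_aux k j (k - j) (by omega)
  rw [Eaux] at hmain
  rw [hmain, Gaux, Finset.sum_filter]
  apply Finset.sum_congr rfl
  intro i _
  by_cases hp : ∀ s, 0 < i s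
  · rw [if_pos hp, one_div, ← Finset.prod_inv_distrib]
  · rw [if_neg hp]
    push_neg at hp
    obtain ⟨s, hs⟩ := hp
    have hs0 : i s = 0 := by omega
    exact Finset.prod_eq_zero (Finset.mem_univ s) (by simp [hs0])
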